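/- Let c, m > 0 and θ ∈ ℝ, and define γ : ℝ → ℝ³ by γ(s) = m·e^{(cos θ/√(1+c²))·s}·(c·cos((sin θ/c)·s), c·sin((sin θ/c)·s), 1). Then γ has hyperbolic unit speed, and its hyperbolic covariant acceleration A(s) = γ''(s) − (2·γ₃'(s)/γ₃(s))·γ'(s) + (‖γ'(s)‖ₑ²/γ₃(s))·e₃ satisfies ‖A(s)‖ₑ/γ₃(s) = (c² + sin²θ)/(c·√(1+c²)) for all s; that is, the hyperbolic curvature of γ is constant and equals (c² + sin²θ)/(c·√(1+c²)). -/

import Mathlib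

open Real
open scoped RealInnerProductSpace

/-- A point/vector of Euclidean 3-space. -/
noncomputable def v3 (x y z : ℝ) : EuclideanSpace ℝ (Fin 3) := WithLp.toLp 2 ![x, y, z]

/-- Hyperbolic (upper half-space) inner product of u and v at the point p. -/
noncomputable def hInner (p u v : EuclideanSpace ℝ (Fin 3)) : ℝ := ⟪u, v⟫ / (p 2) ^ 2

/-- Hyperbolic (upper half-space) norm of v at the point p. -/
noncomputable def hNorm (p v : EuclideanSpace ℝ (Fin 3)) : ℝ := ‖v‖ / p 2

/-- Covariant acceleration ∇_{γ'}γ' of a hyperbolic unit-speed curve in the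
upper half-space model: A(s) = γ''(s) − (2γ₃'(s)/γ₃(s))·γ'(s) + (‖γ'(s)‖ₑ²/γ₃(s))·e₃. -/
noncomputable def hAccel (γ : ℝ → EuclideanSpace ℝ (Fin 3)) (s : ℝ) :
    EuclideanSpace ℝ (Fin 3) :=
  deriv (deriv γ) s - (2 * deriv (fun t => γ t 2) s / γ s 2) • deriv γ s
    + (‖deriv γ s‖ ^ 2 / γ s 2) • v3 0 0 1


lemma v3_apply2 (x y z : ℝ) : v3 x y z 2 = z := by simp [v3]

lemma norm_v3 (x y z : ℝ) : ‖v3 x y z‖ = Real.sqrt (x^2 + y^2 + z^2) := by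
  rw [EuclideanSpace.norm_eq]
  simp [v3, Fin.sum_univ_three, Real.norm_eq_abs, sq_abs]

lemma hasDerivAt_v3 {f g h : ℝ → ℝ} {x' y' z' s : ℝ}
    (hf : HasDerivAt f x' s) (hg : HasDerivAt g y' s) (hh : HasDerivAt h z' s) :
    HasDerivAt (fun t => v3 (f t) (g t) (h t)) (v3 x' y' z') s := by
  have e : (fun t => v3 (f t) (g t) (h t))
      = fun t => f t • v3 1 0 0 + g t • v3 0 1 0 + h t • v3 0 0 1 := by
    funext t; ext i; fin_cases i <;> simp [v3]
  have e2 : v3 x' y' z' = x' • v3 1 0 0 + y' • v3 0 1 0 + z' • v3 0 0 1 := by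
    ext i; fin_cases i <;> simp [v3]
  rw [e, e2]
  exact ((hf.smul_const _).add (hg.smul_const _)).add (hh.smul_const _)

lemma v3_comb (x y z x' y' z' r q : ℝ) :
    v3 x y z - r • v3 x' y' z' + q • v3 0 0 1 = v3 (x - r*x') (y - r*y') (z - r*z' + q) := by
  ext i; fin_cases i <;> simp [v3]


/-- The helix γ(s) = m·e^{(cos θ/√(1+c²))s}·(c cos((sin θ/c)s),
c sin((sin θ/c)s), 1) has hyperbolic unit speed and constant hyperbolic curvature
(c² + sin²θ)/(c√(1+c²)). -/
theorem stmt_10 (c m θ : ℝ) (hc : 0 < c) (hm : 0 < m)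
    (γ : ℝ → EuclideanSpace ℝ (Fin 3))
    (hγ : γ = fun s => (m * Real.exp ((Real.cos θ / Real.sqrt (1 + c ^ 2)) * s)) •
        v3 (c * Real.cos ((Real.sin θ / c) * s)) (c * Real.sin ((Real.sin θ / c) * s)) 1) :
    (∀ s, ‖deriv γ s‖ = γ s 2) ∧
    (∀ s, ‖hAccel γ s‖ / γ s 2
        = (c ^ 2 + Real.sin θ ^ 2) / (c * Real.sqrt (1 + c ^ 2))) := by
  have h1c : (0:ℝ) < 1 + c ^ 2 := by positivity
  have hsq : (0:ℝ) < Real.sqrt (1 + c ^ 2) := Real.sqrt_pos.2 h1c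
  set a := Real.cos θ / Real.sqrt (1 + c ^ 2) with ha
  set b := Real.sin θ / c with hb
  have hsqsq : Real.sqrt (1 + c ^ 2) ^ 2 = 1 + c ^ 2 := Real.sq_sqrt h1c.le
  have ha2 : a ^ 2 * (1 + c ^ 2) = Real.cos θ ^ 2 := by
    rw [ha, div_pow, hsqsq]; field_simp
  have hcb : c * b = Real.sin θ := by rw [hb]; field_simp
  have hpy : Real.sin θ ^ 2 + Real.cos θ ^ 2 = 1 := Real.sin_sq_add_cos_sq θ
  clear_value a b
  have hγ' : γ = fun s => v3 (m * Real.exp (a*s) * (c * Real.cos (b*s)))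
      (m * Real.exp (a*s) * (c * Real.sin (b*s))) (m * Real.exp (a*s)) := by
    rw [hγ]; funext s; ext i; fin_cases i <;> (simp [v3]; try ring)
  have hidb : ∀ s : ℝ, HasDerivAt (fun t => b * t) b s := fun s => by
    simpa using (hasDerivAt_id s).const_mul b
  have hE : ∀ s : ℝ, HasDerivAt (fun t => m * Real.exp (a*t)) (m * Real.exp (a*s) * a) s := by
    intro s
    have h0 : HasDerivAt (fun t : ℝ => a * t) a s := by
      simpa using (hasDerivAt_id s).const_mul a
    have := (h0.exp).const_mul m
    refine this.congr_deriv (Eq.symm ?_); ring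
  have hEpos : ∀ s : ℝ, (0:ℝ) < m * Real.exp (a*s) := fun s => by positivity
  set X' : ℝ → ℝ := fun s => m * Real.exp (a*s) * (a * c * Real.cos (b*s) - Real.sin θ * Real.sin (b*s)) with hX'
  set Y' : ℝ → ℝ := fun s => m * Real.exp (a*s) * (a * c * Real.sin (b*s) + Real.sin θ * Real.cos (b*s)) with hY'
  set Z' : ℝ → ℝ := fun s => m * Real.exp (a*s) * a with hZ'
  have hD1 : ∀ s : ℝ, HasDerivAt γ (v3 (X' s) (Y' s) (Z' s)) s := by
    intro s
    rw [hγ']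
    refine hasDerivAt_v3 ?_ ?_ ?_
    · have h := (hE s).mul (((hidb s).cos).const_mul c)
      have hlc : c * (-Real.sin (b*s) * b) = -(Real.sin θ * Real.sin (b*s)) := by
        rw [← hcb]; ring
      refine h.congr_deriv (Eq.symm ?_)
      simp only [hX']
      linear_combination (-(m * Real.exp (a*s))) * hlc
    · have h := (hE s).mul (((hidb s).sin).const_mul c)
      have hlc : c * (Real.cos (b*s) * b) = Real.sin θ * Real.cos (b*s) := by
        rw [← hcb]; ring
      refine h.congr_deriv (Eq.symm ?_)
      simp only [hY']
      linear_combination (-(m * Real.exp (a*s))) * hlc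
    · exact hE s
  have hd1 : deriv γ = fun s => v3 (X' s) (Y' s) (Z' s) := funext fun s => (hD1 s).deriv
  have hspeed : ∀ s, ‖deriv γ s‖ = γ s 2 := by
    intro s
    rw [hd1, hγ']
    simp only [v3_apply2, norm_v3]
    rw [show X' s ^2 + Y' s ^2 + Z' s ^2 = (m * Real.exp (a*s))^2 by
      simp only [hX', hY', hZ']
      have h1 := Real.sin_sq_add_cos_sq (b*s)
      linear_combination ((m * Real.exp (a*s))^2*(a^2*c^2 + Real.sin θ^2))*h1
        + (m * Real.exp (a*s))^2*ha2 + (m * Real.exp (a*s))^2*hpy]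
    exact Real.sqrt_sq (hEpos s).le
  refine ⟨hspeed, ?_⟩
  set X'' : ℝ → ℝ := fun s => m * Real.exp (a*s) *
      (a * (a * c * Real.cos (b*s) - Real.sin θ * Real.sin (b*s))
       - b * (a * c * Real.sin (b*s) + Real.sin θ * Real.cos (b*s))) with hX''
  set Y'' : ℝ → ℝ := fun s => m * Real.exp (a*s) *
      (a * (a * c * Real.sin (b*s) + Real.sin θ * Real.cos (b*s))
       + b * (a * c * Real.cos (b*s) - Real.sin θ * Real.sin (b*s))) with hY''
  set Z'' : ℝ → ℝ := fun s => m * Real.exp (a*s) * (a * a) with hZ''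
  have hD2 : ∀ s : ℝ, HasDerivAt (deriv γ) (v3 (X'' s) (Y'' s) (Z'' s)) s := by
    intro s
    rw [hd1]
    refine hasDerivAt_v3 ?_ ?_ ?_
    · have h := (hE s).mul ((((hidb s).cos).const_mul (a*c)).sub
        (((hidb s).sin).const_mul (Real.sin θ)))
      refine h.congr_deriv (Eq.symm ?_)
      simp only [hX'', Pi.sub_apply]; ring
    · have h := (hE s).mul ((((hidb s).sin).const_mul (a*c)).add
        (((hidb s).cos).const_mul (Real.sin θ)))
      refine h.congr_deriv (Eq.symm ?_)
      simp only [hY'', Pi.add_apply]; ring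
    · have h := (hE s).mul_const a
      refine h.congr_deriv (Eq.symm ?_)
      simp only [hZ'']; ring
  have hd2 : deriv (deriv γ) = fun s => v3 (X'' s) (Y'' s) (Z'' s) :=
    funext fun s => (hD2 s).deriv
  have hz2 : (fun t => γ t 2) = fun t => m * Real.exp (a*t) := by
    rw [hγ']; funext t; simp [v3_apply2]
  intro s
  have hγ2 : γ s 2 = m * Real.exp (a*s) := by rw [hγ']; simp [v3_apply2]
  have hdz : deriv (fun t => γ t 2) s = m * Real.exp (a*s) * a := by
    rw [hz2]; exact (hE s).deriv
  have hne : m * Real.exp (a*s) ≠ 0 := (hEpos s).ne'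
  set K := a * a * c + b * Real.sin θ with hK
  clear_value K
  have hKnn : 0 ≤ K := by
    rw [hK, hb]
    have h1 : 0 ≤ a * a * c := mul_nonneg (mul_self_nonneg a) hc.le
    have h2 : 0 ≤ Real.sin θ / c * Real.sin θ := by
      rw [div_mul_eq_mul_div]
      exact div_nonneg (by nlinarith [mul_self_nonneg (Real.sin θ)]) hc.le
    linarith
  have hns : ‖deriv γ s‖ = m * Real.exp (a*s) := by rw [hspeed s, hγ2]
  have e1 : X'' s - (2 * a) * X' s = -(m * Real.exp (a*s)) * K * Real.cos (b*s) := by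
    simp only [hX'', hX', hK]
    linear_combination (-(m * Real.exp (a*s)) * a * Real.sin (b*s)) * hcb
  have e2 : Y'' s - (2 * a) * Y' s = -(m * Real.exp (a*s)) * K * Real.sin (b*s) := by
    simp only [hY'', hY', hK]
    linear_combination ((m * Real.exp (a*s)) * a * Real.cos (b*s)) * hcb
  have h1a : 1 - a^2 = c * K := by
    rw [hK]
    linear_combination (-Real.sin θ) * hcb + (-1) * ha2 + (-1) * hpy
  have e3 : Z'' s - (2 * a) * Z' s + m * Real.exp (a*s)
      = m * Real.exp (a*s) * (c * K) := by
    simp only [hZ'', hZ']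
    linear_combination (m * Real.exp (a*s)) * h1a
  have hA : hAccel γ s = v3 (-(m * Real.exp (a*s)) * K * Real.cos (b*s))
      (-(m * Real.exp (a*s)) * K * Real.sin (b*s)) (m * Real.exp (a*s) * (c * K)) := by
    rw [hAccel, hns, hdz, hγ2, hd2, hd1]
    simp only
    have hr : 2 * (m * Real.exp (a*s) * a) / (m * Real.exp (a*s)) = 2 * a := by
      field_simp
    have hq : (m * Real.exp (a*s))^2 / (m * Real.exp (a*s)) = m * Real.exp (a*s) := by
      rw [sq, mul_div_assoc, div_self hne, mul_one]
    rw [hr, hq, v3_comb, e1, e2, e3]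
  rw [hA, norm_v3]
  have hnorm : Real.sqrt ((-(m * Real.exp (a*s)) * K * Real.cos (b*s))^2
      + (-(m * Real.exp (a*s)) * K * Real.sin (b*s))^2 + (m * Real.exp (a*s) * (c * K))^2)
      = m * Real.exp (a*s) * K * Real.sqrt (1 + c^2) := by
    rw [show (-(m * Real.exp (a*s)) * K * Real.cos (b*s))^2
      + (-(m * Real.exp (a*s)) * K * Real.sin (b*s))^2 + (m * Real.exp (a*s) * (c * K))^2
      = (m * Real.exp (a*s) * K * Real.sqrt (1 + c^2))^2 by
        have h1 := Real.sin_sq_add_cos_sq (b*s)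
        linear_combination ((m * Real.exp (a*s))^2 * K^2) * h1
          - ((m * Real.exp (a*s))^2 * K^2) * hsqsq]
    exact Real.sqrt_sq (mul_nonneg (mul_nonneg (by positivity) hKnn) hsq.le)
  rw [hnorm, hγ2]
  rw [show m * Real.exp (a*s) * K * Real.sqrt (1+c^2) / (m * Real.exp (a*s))
      = K * Real.sqrt (1+c^2) from by field_simp]
  rw [eq_div_iff (by positivity)]
  have hKc : K * c = a^2 * c^2 + Real.sin θ ^2 := by
    rw [hK]
    linear_combination Real.sin θ * hcb
  linear_combination (K * c) * hsqsq + (1 + c^2) * hKc + c^2 * ha2 + c^2 * hpy
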